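/- Let F̃ : ℝ² → ℝ² be a homeomorphism, h̃ : ℝ² → ℝ² continuous with h̃∘F̃ = A∘h̃, sup‖h̃ − id‖ = M₀ < ∞, A expanding linear. Suppose a curve family 𝓕ᵘ is F̃-invariant and quasi-isometric: a·d(x,y) + b ≥ d_{𝓕ᵘ}(x,y) for points on the same leaf, and leafwise distance expands: d_{𝓕ᵘ}(F̃ⁿx, F̃ⁿy) ≥ μⁿ·d_{𝓕ᵘ}(x,y) with μ > 1. If ỹ' ∈ 𝓕ᵘ(ỹ) and ỹ' ≠ ỹ, then h̃(ỹ) ≠ h̃(ỹ'). In other words, h̃ is injective along each leaf of 𝓕ᵘ. -/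
import Mathlib


/-- Injectivity of the semiconjugacy along unstable leaves.  Let `F` be a
homeomorphism of `ℝ²`, `A` linear, `h` continuous with `h∘F = A∘h` and
`‖h − id‖ ≤ M₀`.  Let `𝓕ᵘ` be an `F`-invariant family of leaves with a
leafwise distance `dU` which is quasi-isometric (`dU x y ≤ a·d(x,y) + b`),
positive on distinct leaf points, and expanded by `F`
(`dU(Fⁿx, Fⁿy) ≥ μⁿ·dU(x,y)`, `μ > 1`).  Then `h` is injective along each
leaf: if `y' ∈ 𝓕ᵘ(y)` and `y' ≠ y` then `h y ≠ h y'`. -/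
theorem stmt18
    (F : EuclideanSpace ℝ (Fin 2) ≃ₜ EuclideanSpace ℝ (Fin 2))
    (A : EuclideanSpace ℝ (Fin 2) →ₗ[ℝ] EuclideanSpace ℝ (Fin 2))
    (h : EuclideanSpace ℝ (Fin 2) → EuclideanSpace ℝ (Fin 2))
    (hcont : Continuous h)
    (hconj : ∀ x, h (F x) = A (h x))
    (M₀ : ℝ) (hM₀ : ∀ x, ‖h x - x‖ ≤ M₀)
    (𝓕 : EuclideanSpace ℝ (Fin 2) → Set (EuclideanSpace ℝ (Fin 2)))
    (hinv : ∀ x, F '' 𝓕 x = 𝓕 (F x))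
    (dU : EuclideanSpace ℝ (Fin 2) → EuclideanSpace ℝ (Fin 2) → ℝ)
    (a b μ : ℝ) (ha : 0 < a) (hb : 0 ≤ b) (hμ : 1 < μ)
    (hqi : ∀ x, ∀ y ∈ 𝓕 x, dU x y ≤ a * dist x y + b)
    (hpos : ∀ x, ∀ y ∈ 𝓕 x, y ≠ x → 0 < dU x y)
    (hexp : ∀ x, ∀ y ∈ 𝓕 x, ∀ n : ℕ,
      μ ^ n * dU x y ≤ dU ((⇑F)^[n] x) ((⇑F)^[n] y)) :
    ∀ y y', y' ∈ 𝓕 y → y' ≠ y → h y ≠ h y' := by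
  intro y y' hmem hne heq
  have hM₀0 : 0 ≤ M₀ := le_trans (norm_nonneg _) (hM₀ y)
  -- iterated membership
  have hmemn : ∀ n : ℕ, (⇑F)^[n] y' ∈ 𝓕 ((⇑F)^[n] y) := by
    intro n
    induction n with
    | zero => simpa using hmem
    | succ n ih =>
      rw [Function.iterate_succ_apply', Function.iterate_succ_apply', ← hinv]
      exact ⟨_, ih, rfl⟩
  -- iterated equality of images
  have hequal : ∀ n : ℕ, h ((⇑F)^[n] y) = h ((⇑F)^[n] y') := by
    intro n
    induction n with
    | zero => simpa using heq
    | succ n ih =>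
      rw [Function.iterate_succ_apply', Function.iterate_succ_apply', hconj, hconj, ih]
  -- distance bound
  have hdistn : ∀ n : ℕ, dist ((⇑F)^[n] y) ((⇑F)^[n] y') ≤ 2 * M₀ := by
    intro n
    set u := (⇑F)^[n] y
    set v := (⇑F)^[n] y'
    have : dist u v ≤ dist u (h u) + dist (h v) v := by
      calc dist u v ≤ dist u (h u) + dist (h u) v := dist_triangle _ _ _
        _ = dist u (h u) + dist (h v) v := by rw [hequal n]
    calc dist u v ≤ dist u (h u) + dist (h v) v := this
      _ ≤ M₀ + M₀ := by
          gcongr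
          · rw [dist_comm, dist_eq_norm]; exact hM₀ u
          · rw [dist_eq_norm]; exact hM₀ v
      _ = 2 * M₀ := by ring
  have hd0 : 0 < dU y y' := hpos y y' hmem hne
  obtain ⟨n, hn⟩ := pow_unbounded_of_one_lt ((a * (2 * M₀) + b) / dU y y') hμ
  have h1 : μ ^ n * dU y y' ≤ dU ((⇑F)^[n] y) ((⇑F)^[n] y') := hexp y y' hmem n
  have h2 : dU ((⇑F)^[n] y) ((⇑F)^[n] y') ≤ a * (2 * M₀) + b := by
    calc dU ((⇑F)^[n] y) ((⇑F)^[n] y')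
        ≤ a * dist ((⇑F)^[n] y) ((⇑F)^[n] y') + b := hqi _ _ (hmemn n)
      _ ≤ a * (2 * M₀) + b := by gcongr; exact hdistn n
  have h3 : (a * (2 * M₀) + b) < μ ^ n * dU y y' := by
    rw [div_lt_iff₀ hd0] at hn
    linarith
  linarith
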